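/- Let $1 \le p < q \le 2$ and $d \ge 1$. Define $r$ by $\frac{1}{r} = \frac{1}{2}(1 - \frac{1}{p} + \frac{1}{q})$ and let $\zeta$ be a Haar-distributed random unitary in $U(d)$. Then $\Big( \mathbb{E} \, \| d \cdot \zeta^{\mathrm{t}} \|_{S_p^d}^{q'} \Big)^{1/q'} = d^{1 + 1/p}$, while the element $A = \big( \sum_{i=1}^d e_{i1} \otimes e_{i1} \big) \otimes \big( \sum_{j=1}^d e_{1j} \otimes e_{1j} \big)$ satisfies $\|A\|_{S_q^d(S_p^d)} = d^{2/r}$, where $S_q^d(S_p^d) = C_q^d \otimes_h C_p^d \otimes_h R_p^d \otimes_h R_q^d$. Consequently, any constant $K$ in the operator-space type-$q$ inequality $\big( \mathbb{E} \| d \, \mathrm{tr}(A \zeta) \|_{S_p^d}^{q'} \big)^{1/q'} \le K \, d^{1/q} \|A\|_{S_q^d(S_p^d)}$ satisfies $K \ge d^{2(1/p - 1/q)}$. -/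

import Mathlib

open scoped ENNReal BigOperators ComplexOrder Kronecker
open Matrix

noncomputable def ctmEig {m n : Type*} [Fintype m] [Fintype n] [DecidableEq n]
    (a : Matrix m n ℂ) : n → ℝ :=
  (Matrix.posSemidef_conjTranspose_mul_self a).isHermitian.eigenvalues

/-- Schatten `p`-norm of a (rectangular) complex matrix; `p = ∞` is the operator norm. -/
noncomputable def schNorm {m n : Type*} [Fintype m] [Fintype n] [DecidableEq n]
    (p : ℝ≥0∞) (a : Matrix m n ℂ) : ℝ :=
  if p = ∞ then ⨆ j, Real.sqrt (ctmEig a j)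
  else (∑ j, ctmEig a j ^ (p.toReal / 2)) ^ (1 / p.toReal)

/-- The norm of Pisier's vector-valued Schatten class `S_q^N(S_p^M)` for `p ≤ q`, via the
factorization/supremum formula
`‖x‖_{S_q(S_p)} = sup { ‖(a ⊗ 1) x (b ⊗ 1)‖_{S_p} : ‖a‖_{S_{2t}}, ‖b‖_{S_{2t}} ≤ 1 }`
where `1/p = 1/q + 1/t` (so `2t = 2pq/(q-p)`, `= ∞` when `p = q`). -/
noncomputable def sqSpNorm (q p : ℝ) {N M : ℕ}
    (x : Matrix (Fin N × Fin M) (Fin N × Fin M) ℂ) : ℝ :=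
  sSup {c : ℝ | ∃ a b : Matrix (Fin N) (Fin N) ℂ,
    schNorm (if p = q then ∞ else ENNReal.ofReal (2 * p * q / (q - p))) a ≤ 1 ∧
    schNorm (if p = q then ∞ else ENNReal.ofReal (2 * p * q / (q - p))) b ≤ 1 ∧
    c = schNorm (ENNReal.ofReal p)
          ((a ⊗ₖ (1 : Matrix (Fin M) (Fin M) ℂ)) * x * (b ⊗ₖ (1 : Matrix (Fin M) (Fin M) ℂ)))}

/- ### Auxiliary lemmas -/

lemma abs_sq_eq_star_mul_self (z : ℂ) : ((‖z‖ : ℂ))^2 = star z * z := by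
  rw [Complex.star_def, ← Complex.normSq_eq_conj_mul_self, ← Complex.sq_norm]
  norm_cast

lemma trace_eq_sum_eig {n : Type*} [Fintype n] [DecidableEq n] {A : Matrix n n ℂ}
    (hA : A.IsHermitian) : A.trace = ∑ i, (hA.eigenvalues i : ℂ) := by
  conv_lhs => rw [hA.spectral_theorem, Unitary.conjStarAlgAut_apply]
  rw [Matrix.trace_mul_cycle, Unitary.coe_star_mul_self, Matrix.one_mul, Matrix.trace_diagonal]
  rfl

lemma trace_sq_eq_sum_eig {n : Type*} [Fintype n] [DecidableEq n] {A : Matrix n n ℂ}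
    (hA : A.IsHermitian) : (A * A).trace = ∑ i, (hA.eigenvalues i : ℂ) ^ 2 := by
  have hU : (star (hA.eigenvectorUnitary : Matrix n n ℂ)) * hA.eigenvectorUnitary = 1 :=
    Unitary.coe_star_mul_self _
  conv_lhs => rw [hA.spectral_theorem, Unitary.conjStarAlgAut_apply]
  rw [show ((hA.eigenvectorUnitary : Matrix n n ℂ) * diagonal (RCLike.ofReal ∘ hA.eigenvalues)
      * star (hA.eigenvectorUnitary : Matrix n n ℂ))
      * ((hA.eigenvectorUnitary : Matrix n n ℂ) * diagonal (RCLike.ofReal ∘ hA.eigenvalues)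
      * star (hA.eigenvectorUnitary : Matrix n n ℂ))
      = (hA.eigenvectorUnitary : Matrix n n ℂ) * (diagonal (RCLike.ofReal ∘ hA.eigenvalues)
        * diagonal (RCLike.ofReal ∘ hA.eigenvalues)) * star (hA.eigenvectorUnitary : Matrix n n ℂ)
      by rw [Matrix.mul_assoc, Matrix.mul_assoc, Matrix.mul_assoc]
         rw [← Matrix.mul_assoc (star _) _, hU, Matrix.one_mul]
         rw [Matrix.mul_assoc, Matrix.mul_assoc]]
  rw [Matrix.trace_mul_cycle, ← Matrix.mul_assoc, Unitary.coe_star_mul_self, Matrix.one_mul,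
    Matrix.diagonal_mul_diagonal, Matrix.trace_diagonal]
  simp [sq]

lemma sum_rpow_of_sq {n : Type*} [Fintype n] [DecidableEq n] (f : n → ℝ) (hnn : ∀ i, 0 ≤ f i)
    (hsq : ∑ i, (f i) ^ 2 = (∑ i, f i) ^ 2) {α : ℝ} (hα : 0 < α) :
    ∑ i, f i ^ α = (∑ i, f i) ^ α := by
  rcases eq_or_lt_of_le (Finset.sum_nonneg fun i (_ : i ∈ Finset.univ) => hnn i) with h0 | h0
  · have hall : ∀ i ∈ Finset.univ, f i = 0 :=
      (Finset.sum_eq_zero_iff_of_nonneg (fun i _ => hnn i)).mp h0.symm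
    rw [← h0, Real.zero_rpow hα.ne']
    exact Finset.sum_eq_zero fun i hi => by rw [hall i hi, Real.zero_rpow hα.ne']
  · have hexp : (∑ i, f i) * (∑ i, f i) = ∑ i, ∑ j, f i * f j := by rw [Finset.sum_mul_sum]
    have hsplit : ∀ i : n, ∑ j, f i * f j
        = f i * f i + ∑ j ∈ Finset.univ.erase i, f i * f j := by
      intro i
      exact (Finset.add_sum_erase _ _ (Finset.mem_univ i)).symm
    have hoff : ∑ i, ∑ j ∈ Finset.univ.erase i, f i * f j = 0 := by
      have h1 : (∑ i, f i) * (∑ i, f i)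
          = ∑ i, (f i * f i) + ∑ i, ∑ j ∈ Finset.univ.erase i, f i * f j := by
        rw [hexp, ← Finset.sum_add_distrib]; exact Finset.sum_congr rfl fun i _ => hsplit i
      have h2 : ∑ i, f i * f i = (∑ i, f i) * (∑ i, f i) := by
        simp only [sq] at hsq; rw [hsq]
      linarith
    have hzero : ∀ i ∈ Finset.univ, ∑ j ∈ Finset.univ.erase i, f i * f j = 0 := by
      refine (Finset.sum_eq_zero_iff_of_nonneg ?_).mp hoff
      intro i _
      exact Finset.sum_nonneg fun j _ => mul_nonneg (hnn i) (hnn j)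
    obtain ⟨i0, hi0⟩ : ∃ i, f i ≠ 0 := by
      by_contra hc
      push_neg at hc
      rw [Finset.sum_congr rfl fun i _ => hc i] at h0
      simp at h0
    have hother : ∀ j, j ≠ i0 → f j = 0 := by
      intro j hj
      have hterm : f i0 * f j = 0 := by
        have := (Finset.sum_eq_zero_iff_of_nonneg
          (fun j _ => mul_nonneg (hnn i0) (hnn j))).mp (hzero i0 (Finset.mem_univ i0))
        exact this j (Finset.mem_erase.mpr ⟨hj, Finset.mem_univ j⟩)
      rcases mul_eq_zero.mp hterm with h | h
      · exact absurd h hi0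
      · exact h
    have hsval : (∑ i, f i) = f i0 :=
      Finset.sum_eq_single i0 (fun j _ hj => hother j hj) (fun h => absurd (Finset.mem_univ i0) h)
    rw [Finset.sum_eq_single i0 (fun j _ hj => by rw [hother j hj, Real.zero_rpow hα.ne'])
      (fun h => absurd (Finset.mem_univ i0) h), hsval]

lemma schNorm_rankOne {ι : Type*} [Fintype ι] [DecidableEq ι] (x y : ι → ℂ) {p : ℝ} (hp : 0 < p) :
    schNorm (ENNReal.ofReal p) (Matrix.of fun P Q => x P * y Q)
      = ((∑ P, ‖x P‖ ^ 2) * (∑ Q, ‖y Q‖ ^ 2)) ^ ((2:ℝ)⁻¹) := by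
  classical
  set N : Matrix ι ι ℂ := Matrix.of fun P Q => x P * y Q with hN
  set X : ℝ := ∑ P, ‖x P‖ ^ 2 with hX
  set Y : ℝ := ∑ Q, ‖y Q‖ ^ 2 with hY
  have hXnn : 0 ≤ X := Finset.sum_nonneg fun _ _ => sq_nonneg _
  have hYnn : 0 ≤ Y := Finset.sum_nonneg fun _ _ => sq_nonneg _
  have hH := (Matrix.posSemidef_conjTranspose_mul_self N)
  have hmat : Nᴴ * N = Matrix.of (fun Q R => ((X:ℂ)) * (star (y Q) * y R)) := by
    ext Q R
    simp only [Matrix.mul_apply, Matrix.conjTranspose_apply, hN, Matrix.of_apply]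
    rw [hX]
    push_cast
    rw [Finset.sum_mul]
    refine Finset.sum_congr rfl fun P _ => ?_
    rw [abs_sq_eq_star_mul_self (x P), star_mul']
    ring
  have hsq' : (Nᴴ * N) * (Nᴴ * N) = Matrix.of (fun Q R => ((X:ℂ))^2 * (Y:ℂ) * (star (y Q) * y R)) := by
    rw [hmat]
    ext Q R
    simp only [Matrix.mul_apply, Matrix.of_apply]
    rw [hY]
    push_cast
    rw [show (∑ Q, ((‖y Q‖:ℂ))^2) = ∑ Q, star (y Q) * y Q from
      Finset.sum_congr rfl fun Q _ => abs_sq_eq_star_mul_self (y Q)]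
    rw [Finset.mul_sum, Finset.sum_mul]
    refine Finset.sum_congr rfl fun S _ => ?_
    ring
  have htr1 : (Nᴴ * N).trace = ((X * Y : ℝ) : ℂ) := by
    rw [hmat]
    simp only [Matrix.trace, Matrix.diag, Matrix.of_apply]
    push_cast
    rw [show (∑ Q, (X:ℂ) * (star (y Q) * y Q)) = (X:ℂ) * ∑ Q, star (y Q) * y Q from
      (Finset.mul_sum _ _ _).symm]
    rw [show (∑ Q, star (y Q) * y Q) = ((Y:ℝ):ℂ) from by
      rw [hY]; push_cast
      exact (Finset.sum_congr rfl fun Q _ => (abs_sq_eq_star_mul_self (y Q)).symm)]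
  have htr2 : ((Nᴴ * N) * (Nᴴ * N)).trace = (((X * Y : ℝ) : ℂ))^2 := by
    rw [hsq']
    simp only [Matrix.trace, Matrix.diag, Matrix.of_apply]
    rw [show (∑ Q, (X:ℂ)^2 * (Y:ℂ) * (star (y Q) * y Q))
        = (X:ℂ)^2 * (Y:ℂ) * ∑ Q, star (y Q) * y Q from (Finset.mul_sum _ _ _).symm]
    rw [show (∑ Q, star (y Q) * y Q) = ((Y:ℝ):ℂ) from by
      rw [hY]; push_cast
      exact (Finset.sum_congr rfl fun Q _ => (abs_sq_eq_star_mul_self (y Q)).symm)]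
    push_cast
    ring
  have hsum : ∑ i, ctmEig N i = X * Y := by
    have := trace_eq_sum_eig hH.isHermitian
    rw [htr1] at this
    have : ((X * Y : ℝ) : ℂ) = ((∑ i, ctmEig N i : ℝ) : ℂ) := by
      rw [this]; push_cast; rfl
    exact_mod_cast this.symm
  have hsumsq : ∑ i, (ctmEig N i)^2 = (X * Y)^2 := by
    have := trace_sq_eq_sum_eig hH.isHermitian
    rw [htr2] at this
    have h3 : (((X * Y : ℝ) : ℂ))^2 = ((∑ i, (ctmEig N i)^2 : ℝ) : ℂ) := by
      rw [this]; push_cast; rfl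
    exact_mod_cast h3.symm
  have hnn : ∀ i, 0 ≤ ctmEig N i := fun i => hH.eigenvalues_nonneg i
  have hkey : ∑ i, ctmEig N i ^ (p/2) = (X * Y) ^ (p/2) := by
    rw [← hsum]
    exact sum_rpow_of_sq _ hnn (by rw [hsumsq, hsum]) (by positivity)
  rw [schNorm, if_neg (by simp : ENNReal.ofReal p ≠ ∞), ENNReal.toReal_ofReal hp.le, hkey,
    ← Real.rpow_mul (by positivity)]
  congr 1
  field_simp

lemma eig_congr {n : Type*} [Fintype n] [DecidableEq n] {A B : Matrix n n ℂ} (h : A = B)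
    (hA : A.IsHermitian) (hB : B.IsHermitian) : hA.eigenvalues = hB.eigenvalues := by
  subst h; rfl

lemma eig_smul_one {n : Type*} [Fintype n] [DecidableEq n] (γ : ℝ)
    (hH : Matrix.IsHermitian (((γ:ℂ)) • (1 : Matrix n n ℂ))) (i : n) :
    hH.eigenvalues i = γ := by
  have h : (star (hH.eigenvectorUnitary : Matrix n n ℂ)) * ((γ:ℂ) • 1) * (hH.eigenvectorUnitary : Matrix n n ℂ)
      = diagonal (RCLike.ofReal ∘ hH.eigenvalues) := by
    have := hH.conjStarAlgAut_star_eigenvectorUnitary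
    rwa [Unitary.conjStarAlgAut_apply, Unitary.coe_star, star_star] at this
  rw [Matrix.mul_smul, Matrix.smul_mul, Matrix.mul_one, Unitary.coe_star_mul_self] at h
  have h2 := congrFun (congrFun h.symm i) i
  simp only [Matrix.diagonal_apply_eq, Function.comp_apply, Matrix.smul_apply,
    Matrix.one_apply_eq, smul_eq_mul, mul_one] at h2
  exact RCLike.ofReal_injective h2

lemma ctmEig_of_scalar {n : Type*} [Fintype n] [DecidableEq n] {M : Matrix n n ℂ} {γ : ℝ}
    (h : Mᴴ * M = ((γ:ℂ)) • 1) (j : n) : ctmEig M j = γ := by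
  have hB : Matrix.IsHermitian (((γ:ℂ)) • (1 : Matrix n n ℂ)) := by
    rw [← h]; exact (Matrix.posSemidef_conjTranspose_mul_self M).isHermitian
  rw [ctmEig, eig_congr h _ hB]
  exact eig_smul_one γ hB j

lemma schNorm_of_scalar {d : ℕ} {M : Matrix (Fin d) (Fin d) ℂ} {γ : ℝ}
    (h : Mᴴ * M = ((γ:ℂ)) • 1) {p : ℝ} (hp : 0 < p) :
    schNorm (ENNReal.ofReal p) M = ((d : ℝ) * γ ^ (p/2)) ^ (1/p) := by
  rw [schNorm, if_neg (by simp : ENNReal.ofReal p ≠ ∞), ENNReal.toReal_ofReal hp.le]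
  congr 1
  rw [Finset.sum_congr rfl fun j _ => by rw [ctmEig_of_scalar h j]]
  rw [Finset.sum_const]
  simp [mul_comm]

lemma eig_sum_eq_frob {n m : Type*} [Fintype n] [Fintype m] [DecidableEq n]
    (a : Matrix m n ℂ) : ∑ j, ctmEig a j = ∑ i, ∑ j, ‖a i j‖ ^ 2 := by
  have h1 := trace_eq_sum_eig (Matrix.posSemidef_conjTranspose_mul_self a).isHermitian
  have h2 : (aᴴ * a).trace = ((∑ i, ∑ j, ‖a i j‖ ^ 2 : ℝ) : ℂ) := by
    simp only [Matrix.trace, Matrix.diag, Matrix.mul_apply, Matrix.conjTranspose_apply]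
    push_cast
    rw [Finset.sum_comm]
    exact Finset.sum_congr rfl fun i _ => Finset.sum_congr rfl fun j _ =>
      (abs_sq_eq_star_mul_self (a i j)).symm
  rw [h2] at h1
  have h3 : ((∑ i, ∑ j, ‖a i j‖ ^ 2 : ℝ) : ℂ) = ((∑ j, ctmEig a j : ℝ) : ℂ) := by
    rw [h1]; push_cast; rfl
  exact_mod_cast h3.symm

lemma frob_le_of_schNorm_le {d : ℕ} (hd : 0 < d) (a : Matrix (Fin d) (Fin d) ℂ) {s2 : ℝ}
    (hs2 : 2 ≤ s2) (ha : schNorm (ENNReal.ofReal s2) a ≤ 1) :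
    ∑ i, ∑ j, ‖a i j‖ ^ 2 ≤ (d:ℝ) ^ (1 - 2/s2) := by
  have hs2' : 0 < s2 := lt_of_lt_of_le two_pos hs2
  have hdR : (0:ℝ) < d := Nat.cast_pos.mpr hd
  set β := s2 / 2 with hβ
  have hβ1 : 1 ≤ β := by rw [hβ]; linarith
  have hβ0 : 0 < β := lt_of_lt_of_le one_pos hβ1
  set l := ctmEig a with hl
  have hnn : ∀ i, 0 ≤ l i := fun i =>
    (Matrix.posSemidef_conjTranspose_mul_self a).eigenvalues_nonneg i
  set S := ∑ j, l j ^ β with hS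
  have hSnn : 0 ≤ S := Finset.sum_nonneg fun j _ => Real.rpow_nonneg (hnn j) _
  have hS1 : S ≤ 1 := by
    have hval : schNorm (ENNReal.ofReal s2) a = S ^ (1/s2) := by
      rw [schNorm, if_neg (by simp : ENNReal.ofReal s2 ≠ ∞), ENNReal.toReal_ofReal hs2'.le]
    have h1 : S ^ (1/s2) ≤ 1 := hval ▸ ha
    have : S = (S ^ (1/s2)) ^ s2 := by
      rw [← Real.rpow_mul hSnn, one_div_mul_cancel hs2'.ne', Real.rpow_one]
    rw [this]
    calc (S ^ (1/s2)) ^ s2 ≤ 1 ^ s2 :=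
          Real.rpow_le_rpow (Real.rpow_nonneg hSnn _) h1 hs2'.le
      _ = 1 := Real.one_rpow _
  have hmean := Real.arith_mean_le_rpow_mean Finset.univ (fun _ => (d:ℝ)⁻¹) l
    (fun i _ => by positivity) (by simp [Finset.sum_const, hdR.ne']) (fun i _ => hnn i) hβ1
  have hLHS : ∑ i, (d:ℝ)⁻¹ * l i = (d:ℝ)⁻¹ * ∑ i, l i := (Finset.mul_sum _ _ _).symm
  have hRHS : (∑ i, (d:ℝ)⁻¹ * l i ^ β) ^ (1/β) = ((d:ℝ)⁻¹) ^ (1/β) * S ^ (1/β) := by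
    rw [← Finset.mul_sum, ← hS, Real.mul_rpow (by positivity) hSnn]
  rw [hLHS, hRHS] at hmean
  have hS2 : S ^ (1/β) ≤ 1 := Real.rpow_le_one hSnn hS1 (by positivity)
  have hstep : (d:ℝ)⁻¹ * ∑ i, l i ≤ ((d:ℝ)⁻¹) ^ (1/β) := by
    calc (d:ℝ)⁻¹ * ∑ i, l i ≤ ((d:ℝ)⁻¹) ^ (1/β) * S ^ (1/β) := hmean
      _ ≤ ((d:ℝ)⁻¹) ^ (1/β) * 1 :=
          mul_le_mul_of_nonneg_left hS2 (Real.rpow_nonneg (by positivity) _)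
      _ = ((d:ℝ)⁻¹) ^ (1/β) := mul_one _
  have hfin : ∑ i, l i ≤ (d:ℝ) * ((d:ℝ)⁻¹) ^ (1/β) := (inv_mul_le_iff₀ hdR).mp hstep
  have hpow : (d:ℝ) * ((d:ℝ)⁻¹) ^ (1/β) = (d:ℝ) ^ (1 - 2/s2) := by
    have h1 : 1/β = 2/s2 := by rw [hβ]; field_simp
    rw [Real.inv_rpow hdR.le, ← Real.rpow_neg hdR.le]
    nth_rewrite 1 [← Real.rpow_one (d:ℝ)]
    rw [← Real.rpow_add hdR, h1]
    ring_nf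
  rw [← eig_sum_eq_frob]
  calc ∑ j, l j ≤ (d:ℝ) * ((d:ℝ)⁻¹) ^ (1/β) := hfin
    _ = (d:ℝ) ^ (1 - 2/s2) := hpow

lemma kron_sandwich {d : ℕ} (a b : Matrix (Fin d) (Fin d) ℂ) :
    (a ⊗ₖ (1 : Matrix (Fin d) (Fin d) ℂ)) *
      (Matrix.of fun P Q : Fin d × Fin d => if P.1 = P.2 ∧ Q.1 = Q.2 then (1:ℂ) else 0) *
      (b ⊗ₖ (1 : Matrix (Fin d) (Fin d) ℂ))
    = Matrix.of fun P Q : Fin d × Fin d => (fun P : Fin d × Fin d => a P.1 P.2) P *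
        (fun Q : Fin d × Fin d => b Q.2 Q.1) Q := by
  ext ⟨i, j⟩ ⟨s, t⟩
  simp only [Matrix.mul_apply, Matrix.kroneckerMap_apply, Matrix.of_apply, Matrix.one_apply,
    Fintype.sum_prod_type]
  simp only [mul_ite, ite_mul, one_mul, mul_one, mul_zero, zero_mul, Finset.sum_ite_eq,
    Finset.sum_ite_eq', Finset.mem_univ, if_true]
  simp only [ite_and]
  simp [Finset.sum_ite_eq, Finset.sum_ite_eq', eq_comm, mul_comm]
open MeasureTheory in
theorem stmt_14 (p q q' r : ℝ) (hp : 1 ≤ p) (hpq : p < q) (hq : q ≤ 2)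
    (hq' : 1/q + 1/q' = 1) (hr : 1/r = (1 - 1/p + 1/q) / 2)
    (d : ℕ) (hd : 0 < d) (Ω : Type) [MeasurableSpace Ω] (μ : Measure Ω)
    [IsProbabilityMeasure μ] (ζ : Ω → Matrix (Fin d) (Fin d) ℂ)
    (hmeas : ∀ i j, Measurable fun ω => ζ ω i j)
    (hunit : ∀ ω, (ζ ω)ᴴ * ζ ω = 1 ∧ ζ ω * (ζ ω)ᴴ = 1) :
    ((∫ ω, schNorm (ENNReal.ofReal p) ((d : ℂ) • (ζ ω)ᵀ) ^ q' ∂μ) ^ (1/q')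
        = (d : ℝ) ^ (1 + 1/p)) ∧
    sqSpNorm q p (Matrix.of fun P Q : Fin d × Fin d =>
        if P.1 = P.2 ∧ Q.1 = Q.2 then (1 : ℂ) else 0) = (d : ℝ) ^ (2/r) ∧
    (∀ K : ℝ,
      (∫ ω, schNorm (ENNReal.ofReal p) ((d : ℂ) • (ζ ω)ᵀ) ^ q' ∂μ) ^ (1/q')
          ≤ K * (d : ℝ) ^ (1/q) *
            sqSpNorm q p (Matrix.of fun P Q : Fin d × Fin d =>
              if P.1 = P.2 ∧ Q.1 = Q.2 then (1 : ℂ) else 0) →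
      (d : ℝ) ^ (2 * (1/p - 1/q)) ≤ K) := by
  have hdR : (0:ℝ) < d := Nat.cast_pos.mpr hd
  have hp0 : 0 < p := lt_of_lt_of_le one_pos hp
  have hq1 : 1 < q := lt_of_le_of_lt hp hpq
  have hq0 : 0 < q := lt_trans one_pos hq1
  have hq'0 : 0 < q' := by
    have h2 : 1/q < 1 := by rw [div_lt_one hq0]; exact hq1
    have h1 : 0 < 1/q' := by linarith
    exact one_div_pos.mp h1
  have hqp : 0 < q - p := sub_pos.mpr hpq
  have hpq' : p ≠ q := ne_of_lt hpq
  set s2 : ℝ := 2 * p * q / (q - p) with hs2def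
  have hs2two : 2 ≤ s2 := by
    rw [hs2def, le_div_iff₀ hqp]
    nlinarith
  have hs2pos : 0 < s2 := lt_of_lt_of_le two_pos hs2two
  have h2r : 2/r = 1 - 1/p + 1/q := by
    rw [show (2:ℝ)/r = 2 * (1/r) by ring, hr]; ring
  have hexp : 1 - 2/s2 = 2/r := by
    have h1 : 2/s2 = 1/p - 1/q := by
      rw [hs2def, div_div_eq_mul_div]
      field_simp
    rw [h2r]
    linarith
  -- Part 1 preliminaries
  have hsch : ∀ ω, schNorm (ENNReal.ofReal p) ((d:ℂ) • (ζ ω)ᵀ) = (d:ℝ) ^ (1 + 1/p) := by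
    intro ω
    have h1 : ((ζ ω)ᵀ)ᴴ * (ζ ω)ᵀ = 1 := by
      have h2 : ((ζ ω)ᵀ)ᴴ * (ζ ω)ᵀ = (ζ ω * (ζ ω)ᴴ)ᵀ := by
        rw [Matrix.transpose_mul]
        congr 1
        all_goals try (ext i j; simp [Matrix.conjTranspose_apply])
      rw [h2, (hunit ω).2, Matrix.transpose_one]
    have hMM : ((d:ℂ) • (ζ ω)ᵀ)ᴴ * ((d:ℂ) • (ζ ω)ᵀ) = ((((d:ℝ)^(2:ℕ) : ℝ)) : ℂ) • 1 := by
      rw [Matrix.conjTranspose_smul, Matrix.smul_mul, Matrix.mul_smul, h1, smul_smul]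
      congr 1
      rw [star_natCast]
      push_cast
      try ring
    rw [schNorm_of_scalar hMM hp0]
    have h3 : ((d:ℝ)^(2:ℕ)) ^ (p/2) = (d:ℝ) ^ p := by
      rw [← Real.rpow_natCast (d:ℝ) 2, ← Real.rpow_mul hdR.le]
      congr 1
      push_cast
      ring
    rw [h3]
    nth_rewrite 1 [← Real.rpow_one (d:ℝ)]
    rw [← Real.rpow_add hdR, ← Real.rpow_mul hdR.le]
    congr 1
    field_simp
    ring
  have part1 : (∫ ω, schNorm (ENNReal.ofReal p) ((d : ℂ) • (ζ ω)ᵀ) ^ q' ∂μ) ^ (1/q')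
      = (d : ℝ) ^ (1 + 1/p) := by
    have hint : (∫ ω, schNorm (ENNReal.ofReal p) ((d:ℂ) • (ζ ω)ᵀ) ^ q' ∂μ)
        = ((d:ℝ) ^ (1 + 1/p)) ^ q' := by
      rw [show (fun ω => schNorm (ENNReal.ofReal p) ((d:ℂ) • (ζ ω)ᵀ) ^ q')
          = fun _ : Ω => ((d:ℝ) ^ (1 + 1/p)) ^ q' from funext fun ω => by rw [hsch ω]]
      simp [integral_const]
    rw [hint, ← Real.rpow_mul (Real.rpow_nonneg hdR.le _), mul_one_div, div_self hq'0.ne',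
      Real.rpow_one]
  -- Part 2
  have part2 : sqSpNorm q p (Matrix.of fun P Q : Fin d × Fin d =>
      if P.1 = P.2 ∧ Q.1 = Q.2 then (1 : ℂ) else 0) = (d : ℝ) ^ (2/r) := by
    rw [sqSpNorm]
    simp only [if_neg hpq', ← hs2def]
    apply IsGreatest.csSup_eq
    constructor
    · -- membership : take a = b = c₀ • 1
      set c₀ : ℝ := (d:ℝ) ^ (-(1/s2)) with hc₀def
      have hc₀pos : 0 < c₀ := Real.rpow_pos_of_pos hdR _
      have hscalar : ((((c₀:ℝ)):ℂ) • (1 : Matrix (Fin d) (Fin d) ℂ))ᴴ *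
          (((c₀:ℝ):ℂ) • 1) = (((c₀^2 : ℝ)) : ℂ) • 1 := by
        rw [Matrix.conjTranspose_smul, Matrix.conjTranspose_one, Matrix.smul_mul,
          Matrix.mul_smul, Matrix.one_mul, smul_smul]
        congr 1
        rw [Complex.star_def, Complex.conj_ofReal]
        push_cast
        ring
      have hbound : schNorm (ENNReal.ofReal s2)
          (((c₀:ℝ):ℂ) • (1 : Matrix (Fin d) (Fin d) ℂ)) ≤ 1 := by
        rw [schNorm_of_scalar hscalar hs2pos]
        have hcs : ((c₀^2:ℝ)) ^ (s2/2) = (d:ℝ)⁻¹ := by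
          rw [hc₀def, ← Real.rpow_natCast ((d:ℝ) ^ (-(1/s2))) 2, ← Real.rpow_mul hdR.le,
            ← Real.rpow_mul hdR.le]
          rw [show -(1/s2) * ((2:ℕ):ℝ) * (s2/2) = -1 by push_cast; field_simp]
          exact Real.rpow_neg_one _
        rw [hcs, mul_inv_cancel₀ hdR.ne', Real.one_rpow]
      refine ⟨((c₀:ℝ):ℂ) • 1, ((c₀:ℝ):ℂ) • 1, hbound, hbound, ?_⟩
      rw [kron_sandwich, schNorm_rankOne _ _ hp0]
      beta_reduce
      have hentry : ∀ i j : Fin d,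
          ‖(((c₀:ℝ):ℂ) • (1 : Matrix (Fin d) (Fin d) ℂ)) i j‖ ^ 2
          = if i = j then c₀^2 else 0 := by
        intro i j
        by_cases h : i = j <;>
          simp [h, Matrix.one_apply, Complex.norm_real, abs_of_nonneg hc₀pos.le]
      have hsum1 : (∑ P : Fin d × Fin d,
          ‖(((c₀:ℝ):ℂ) • (1 : Matrix (Fin d) (Fin d) ℂ)) P.1 P.2‖ ^ 2)
          = (d:ℝ) * c₀^2 := by
        rw [Fintype.sum_prod_type]
        rw [Finset.sum_congr rfl fun i (_ : i ∈ Finset.univ) =>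
          Finset.sum_congr rfl fun j (_ : j ∈ Finset.univ) => hentry i j]
        simp [Finset.sum_ite_eq', mul_comm]
      have hsum2 : (∑ Q : Fin d × Fin d,
          ‖(((c₀:ℝ):ℂ) • (1 : Matrix (Fin d) (Fin d) ℂ)) Q.2 Q.1‖ ^ 2)
          = (d:ℝ) * c₀^2 := by
        rw [Fintype.sum_prod_type]
        rw [Finset.sum_congr rfl fun i (_ : i ∈ Finset.univ) =>
          Finset.sum_congr rfl fun j (_ : j ∈ Finset.univ) => hentry j i]
        simp [Finset.sum_ite_eq, mul_comm]
      rw [hsum1, hsum2]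
      have hnn : (0:ℝ) ≤ (d:ℝ) * c₀^2 := by positivity
      have hhalf : (((d:ℝ)*c₀^2) * ((d:ℝ)*c₀^2)) ^ ((2:ℝ)⁻¹) = (d:ℝ)*c₀^2 := by
        rw [← sq, ← Real.rpow_natCast ((d:ℝ)*c₀^2) 2, ← Real.rpow_mul hnn]
        norm_num
      rw [hhalf]
      calc (d:ℝ) ^ (2/r) = (d:ℝ) ^ (1 - 2/s2) := by rw [hexp]
        _ = (d:ℝ) ^ (1:ℝ) * (d:ℝ) ^ (-(1/s2) * ((2:ℕ):ℝ)) := by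
            rw [← Real.rpow_add hdR]; congr 1; push_cast; ring
        _ = (d:ℝ) * ((d:ℝ) ^ (-(1/s2))) ^ (2:ℕ) := by
            rw [Real.rpow_one, Real.rpow_mul hdR.le, Real.rpow_natCast]
        _ = (d:ℝ) * c₀^2 := by rw [← hc₀def]
    · rintro x ⟨a, b, ha, hb, rfl⟩
      rw [kron_sandwich, schNorm_rankOne _ _ hp0]
      beta_reduce
      have hFa : (∑ P : Fin d × Fin d, ‖a P.1 P.2‖ ^ 2)
          = ∑ i, ∑ j, ‖a i j‖ ^ 2 := Fintype.sum_prod_type _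
      have hFb : (∑ Q : Fin d × Fin d, ‖b Q.2 Q.1‖ ^ 2)
          = ∑ i, ∑ j, ‖b i j‖ ^ 2 := by
        rw [Fintype.sum_prod_type]
        exact Finset.sum_comm
      have hMnn : (0:ℝ) ≤ (d:ℝ) ^ (1 - 2/s2) := (Real.rpow_pos_of_pos hdR _).le
      have hb1 := frob_le_of_schNorm_le hd a hs2two ha
      have hb2 := frob_le_of_schNorm_le hd b hs2two hb
      have hFann : (0:ℝ) ≤ ∑ Q : Fin d × Fin d, ‖b Q.2 Q.1‖ ^ 2 :=
        Finset.sum_nonneg fun _ _ => sq_nonneg _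
      calc ((∑ P : Fin d × Fin d, ‖a P.1 P.2‖ ^ 2) *
              (∑ Q : Fin d × Fin d, ‖b Q.2 Q.1‖ ^ 2)) ^ ((2:ℝ)⁻¹)
          ≤ ((d:ℝ) ^ (1 - 2/s2) * (d:ℝ) ^ (1 - 2/s2)) ^ ((2:ℝ)⁻¹) := by
            apply Real.rpow_le_rpow (by positivity)
            · exact mul_le_mul (hFa ▸ hb1) (hFb ▸ hb2) hFann hMnn
            · norm_num
        _ = (d:ℝ) ^ (1 - 2/s2) := by
            rw [← sq, ← Real.rpow_natCast ((d:ℝ) ^ (1 - 2/s2)) 2,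
              ← Real.rpow_mul hMnn]
            norm_num
        _ = (d:ℝ) ^ (2/r) := by rw [hexp]
  refine ⟨part1, part2, ?_⟩
  intro K hK
  rw [part1, part2] at hK
  have hpos2 : (0:ℝ) < (d:ℝ)^(1/q) * (d:ℝ)^(2/r) := by positivity
  have key : (d:ℝ)^(1+1/p) = (d:ℝ)^(2*(1/p-1/q)) * ((d:ℝ)^(1/q) * (d:ℝ)^(2/r)) := by
    rw [← Real.rpow_add hdR, ← Real.rpow_add hdR]
    congr 1
    linarith [h2r]
  rw [key, mul_assoc] at hK
  exact le_of_mul_le_mul_right hK hpos2
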